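/- Let G be a connected interval graph without an apex and let M be a max clique of G. Then the following are equivalent: (1) ≺_M is asymmetric; (2) ≺_M is a strict weak order (irreflexive, transitive, and incomparability with respect to ≺_M is an equivalence relation on M_G); (3) M is a possible end of G. -/

import Mathlib

/-- `lo, hi` is an interval representation of the (finite simple) graph `G`: each
vertex `v` is assigned the closed interval `[lo v, hi v] ⊆ ℕ`, and distinct vertices
are adjacent iff their intervals intersect. -/
def IsIntervalRep {V : Type} (G : SimpleGraph V) (lo hi : V → ℕ) : Prop :=
  (∀ v : V, lo v ≤ hi v) ∧
  ∀ u v : V, u ≠ v →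
    (G.Adj u v ↔ (Set.Icc (lo u) (hi u) ∩ Set.Icc (lo v) (hi v)).Nonempty)

/-- A graph is an interval graph if it has an interval representation. -/
def IsIntervalGraph {V : Type} (G : SimpleGraph V) : Prop :=
  ∃ lo hi : V → ℕ, IsIntervalRep G lo hi

/-- A max clique: an inclusion-maximal clique. -/
def IsMaxClique {V : Type} (G : SimpleGraph V) (s : Set V) : Prop :=
  G.IsClique s ∧ ∀ t : Set V, G.IsClique t → s ⊆ t → t = s

/-- An apex of a graph: a vertex adjacent to all other vertices. -/
def HasApex {V : Type} (G : SimpleGraph V) : Prop :=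
  ∃ v : V, ∀ u : V, u ≠ v → G.Adj v u

/-- `≺_M`: the smallest binary relation on the max cliques of `G` such that
(i) `M ≺_M C` for every max clique `C ≠ M`;
(ii) `C ≺_M D` whenever `C` is a max clique and there is `E` with `E ≺_M D` and
`(E ∩ C) ∖ D ≠ ∅`; and
(iii) `C ≺_M D` whenever `D` is a max clique and there is `E` with `C ≺_M E` and
`(E ∩ D) ∖ C ≠ ∅`. -/
inductive PrecM {V : Type} (G : SimpleGraph V) (M : Set V) : Set V → Set V → Prop
  | init (C : Set V) : IsMaxClique G C → C ≠ M → PrecM G M M C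
  | ext_left (C D E : Set V) : IsMaxClique G C → PrecM G M E D →
      ((E ∩ C) \ D).Nonempty → PrecM G M C D
  | ext_right (C D E : Set V) : IsMaxClique G D → PrecM G M C E →
      ((E ∩ D) \ C).Nonempty → PrecM G M C D

/-- A minimal interval representation: one for which the number of points of
`⋃_v I_v ⊆ ℕ` is minimum among all interval representations of `G`. -/
def IsMinimalRep {V : Type} (G : SimpleGraph V) (lo hi : V → ℕ) : Prop :=
  IsIntervalRep G lo hi ∧
  ∀ lo' hi' : V → ℕ, IsIntervalRep G lo' hi' →
    (⋃ v : V, Set.Icc (lo v) (hi v)).ncard ≤ (⋃ v : V, Set.Icc (lo' v) (hi' v)).ncard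

/-- `M` is a possible end of `G`: there is a minimal interval representation of `G`
under whose induced order on max cliques `M` is least, i.e. `M` is the max clique
consisting of the intervals containing the leftmost point `k` of the representation. -/
def PossibleEnd {V : Type} (G : SimpleGraph V) (M : Set V) : Prop :=
  ∃ lo hi : V → ℕ, IsMinimalRep G lo hi ∧
    ∃ k : ℕ, (∀ v : V, k ≤ lo v) ∧ M = {v : V | k ∈ Set.Icc (lo v) (hi v)}

/-! ### Auxiliary lemmas -/

section BasicCliques

variable {V : Type}

lemma maxClique_nonempty [Nonempty V] {G : SimpleGraph V} {C : Set V}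
    (hC : IsMaxClique G C) : C.Nonempty := by
  rcases Set.eq_empty_or_nonempty C with h | h
  · obtain ⟨v⟩ := ‹Nonempty V›
    have h1 : G.IsClique {v} := G.isClique_singleton v
    have h2 := hC.2 {v} h1 (h ▸ Set.empty_subset _)
    rw [h] at h2
    exact absurd h2 (Set.singleton_ne_empty v)
  · exact h

lemma maxClique_eq_of_subset {G : SimpleGraph V} {C D : Set V}
    (hC : IsMaxClique G C) (hD : IsMaxClique G D) (h : C ⊆ D) : C = D :=
  (hC.2 D hD.1 h).symm

lemma exists_maxClique_supset [Fintype V] (G : SimpleGraph V) {s : Set V}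
    (hs : G.IsClique s) : ∃ C : Set V, IsMaxClique G C ∧ s ⊆ C := by
  obtain ⟨C, hC, hmax⟩ := Set.Finite.exists_maximalFor id {t : Set V | G.IsClique t ∧ s ⊆ t}
    (Set.toFinite _) ⟨s, hs, subset_rfl⟩
  refine ⟨C, ⟨hC.1, fun t ht hsub => ?_⟩, hC.2⟩
  exact Set.Subset.antisymm (hmax ⟨ht, hC.2.trans hsub⟩ hsub) hsub

lemma exists_maxClique_mem [Fintype V] (G : SimpleGraph V) (v : V) :
    ∃ C : Set V, IsMaxClique G C ∧ v ∈ C := by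
  obtain ⟨C, hC, hsub⟩ := exists_maxClique_supset G (G.isClique_singleton v)
  exact ⟨C, hC, hsub rfl⟩

lemma adj_exists_maxClique [Fintype V] {G : SimpleGraph V} {u v : V} (h : G.Adj u v) :
    ∃ C : Set V, IsMaxClique G C ∧ u ∈ C ∧ v ∈ C := by
  have hcl : G.IsClique {u, v} := SimpleGraph.isClique_pair.mpr fun _ => h
  obtain ⟨C, hC, hsub⟩ := exists_maxClique_supset G hcl
  exact ⟨C, hC, hsub (by simp), hsub (by simp)⟩

lemma mem_of_forall_adj {G : SimpleGraph V} {C : Set V} {v : V}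
    (hC : IsMaxClique G C) (h : ∀ u ∈ C, v ≠ u → G.Adj v u) : v ∈ C := by
  have hcl : G.IsClique (insert v C) := hC.1.insert h
  have h2 := hC.2 _ hcl (Set.subset_insert _ _)
  rw [← h2]
  exact Set.mem_insert _ _

end BasicCliques

section Peak

variable {V : Type}

/-- The largest left endpoint among the intervals of the vertices of `C`; for a max
clique this is a common point of all its intervals. -/
noncomputable def peak (lo : V → ℕ) (C : Set V) : ℕ := sSup (lo '' C)

lemma peak_spec [Fintype V] {G : SimpleGraph V} {lo hi : V → ℕ}
    (hrep : IsIntervalRep G lo hi) {C : Set V} (hC : G.IsClique C) {v : V} (hv : v ∈ C) :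
    lo v ≤ peak lo C ∧ peak lo C ≤ hi v := by
  have hbdd : BddAbove (lo '' C) := (Set.toFinite _).bddAbove
  have hmem : peak lo C ∈ lo '' C :=
    Set.Nonempty.csSup_mem ⟨lo v, v, hv, rfl⟩ (Set.toFinite _)
  obtain ⟨w, hwC, hw⟩ := hmem
  refine ⟨le_csSup hbdd ⟨v, hv, rfl⟩, ?_⟩
  rw [← hw]
  by_cases hvw : w = v
  · subst hvw; exact hrep.1 w
  · have hadj : G.Adj w v := hC hwC hv hvw
    obtain ⟨x, hxw, hxv⟩ := (hrep.2 w v hvw).mp hadj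
    rw [Set.mem_Icc] at hxw hxv
    exact hxw.1.trans hxv.2

lemma mem_of_peak_mem [Fintype V] {G : SimpleGraph V} {lo hi : V → ℕ}
    (hrep : IsIntervalRep G lo hi) {D : Set V} (hD : IsMaxClique G D)
    {v : V} (hv : peak lo D ∈ Set.Icc (lo v) (hi v)) : v ∈ D := by
  rw [Set.mem_Icc] at hv
  refine mem_of_forall_adj hD fun u hu hne => ?_
  have hspec := peak_spec hrep hD.1 hu
  exact (hrep.2 v u hne).mpr ⟨peak lo D,
    Set.mem_inter (Set.mem_Icc.mpr ⟨hv.1, hv.2⟩) (Set.mem_Icc.mpr ⟨hspec.1, hspec.2⟩)⟩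

lemma peak_injOn [Fintype V] {G : SimpleGraph V} {lo hi : V → ℕ}
    (hrep : IsIntervalRep G lo hi) {C D : Set V} (hC : IsMaxClique G C) (hD : IsMaxClique G D)
    (h : peak lo C = peak lo D) : C = D := by
  apply Set.Subset.antisymm
  · intro v hv
    have hspec := peak_spec hrep hC.1 hv
    exact mem_of_peak_mem hrep hD (Set.mem_Icc.mpr ⟨h ▸ hspec.1, h ▸ hspec.2⟩)
  · intro v hv
    have hspec := peak_spec hrep hD.1 hv
    exact mem_of_peak_mem hrep hC (Set.mem_Icc.mpr ⟨h ▸ hspec.1, h ▸ hspec.2⟩)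

end Peak

section PrecBasics

variable {V : Type} {G : SimpleGraph V} {M : Set V}

lemma prec_right {C D : Set V} (h : PrecM G M C D) : IsMaxClique G D := by
  induction h with
  | init C hC _ => exact hC
  | ext_left C D E hC hprem hwit ih => exact ih
  | ext_right C D E hD hprem hwit ih => exact hD

lemma prec_left (hM : IsMaxClique G M) {C D : Set V} (h : PrecM G M C D) :
    IsMaxClique G C := by
  induction h with
  | init C hC _ => exact hM
  | ext_left C D E hC _ _ _ => exact hC
  | ext_right C D E hD hprem hwit ih => exact ih

lemma prec_irrefl (C : Set V) : ¬ PrecM G M C C := by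
  intro h
  cases h with
  | init _ hC hne => exact hne rfl
  | ext_left C D E hC hprem hwit =>
      obtain ⟨v, hv1, hv2⟩ := hwit; exact hv2 hv1.2
  | ext_right C D E hD hprem hwit =>
      obtain ⟨v, hv1, hv2⟩ := hwit; exact hv2 hv1.2

lemma prec_ne {C D : Set V} (h : PrecM G M C D) : C ≠ D :=
  fun he => prec_irrefl D (he ▸ h)

lemma not_prec_M (hM : IsMaxClique G M)
    (hasym : ∀ C D : Set V, PrecM G M C D → ¬ PrecM G M D C)
    {C : Set V} (h : PrecM G M C M) : False :=
  hasym C M h (PrecM.init C (prec_left hM h) (prec_ne h))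

/-- Transitivity of `≺_M`, assuming asymmetry. -/
lemma prec_trans (hM : IsMaxClique G M)
    (hasym : ∀ C D : Set V, PrecM G M C D → ¬ PrecM G M D C) :
    ∀ {D E : Set V}, PrecM G M D E → ∀ {C : Set V}, PrecM G M C D → PrecM G M C E := by
  intro D E h
  induction h with
  | init E hE hne =>
      intro C h1
      exact (not_prec_M hM hasym h1).elim
  | ext_left Y Z E₁ hY hprem hwit ih =>
      -- goal: ∀ C, PrecM C Y → PrecM C Z,  with hprem : PrecM E₁ Z
      intro C h1
      obtain ⟨v, ⟨hvE₁, hvY⟩, hvZ⟩ := hwit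
      by_cases hvC : v ∈ C
      · exact PrecM.ext_left C Z E₁ (prec_left hM h1) hprem ⟨v, ⟨hvE₁, hvC⟩, hvZ⟩
      · exact ih (PrecM.ext_right C E₁ Y (prec_left hM hprem) h1 ⟨v, ⟨hvY, hvE₁⟩, hvC⟩)
  | ext_right Y Z E₁ hZ hprem hwit ih =>
      -- goal: ∀ C, PrecM C Y → PrecM C Z,  with hprem : PrecM Y E₁
      intro C h1
      have h2 := ih h1
      obtain ⟨v, ⟨hvE₁, hvZ⟩, hvY⟩ := hwit
      by_cases hvC : v ∈ C
      · have h3 : PrecM G M Z Y := PrecM.ext_left Z Y C hZ h1 ⟨v, ⟨hvC, hvZ⟩, hvY⟩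
        have h4 : PrecM G M Y Z := PrecM.ext_right Y Z E₁ hZ hprem ⟨v, ⟨hvE₁, hvZ⟩, hvY⟩
        exact (hasym Y Z h4 h3).elim
      · exact PrecM.ext_right C Z E₁ hZ h2 ⟨v, ⟨hvE₁, hvZ⟩, hvC⟩

/-- Weak linearity of `≺_M`: a max clique is comparable "inside" any comparable pair. -/
lemma prec_weaklin (hM : IsMaxClique G M) :
    ∀ {C E : Set V}, PrecM G M C E → ∀ D : Set V, IsMaxClique G D → D ≠ C → D ≠ E →
      PrecM G M C D ∨ PrecM G M D E := by
  intro C E h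
  induction h with
  | init E hE hne =>
      intro D hD hDC hDE
      exact Or.inl (PrecM.init D hD hDC)
  | ext_left Y Z E₁ hY hprem hwit ih =>
      -- result : PrecM Y Z from hprem : PrecM E₁ Z
      intro D hD hDY hDZ
      by_cases hDE₁ : D = E₁
      · subst hDE₁; exact Or.inr hprem
      · rcases ih D hD hDE₁ hDZ with h | h
        · -- h : PrecM E₁ D
          obtain ⟨v, ⟨hvE₁, hvY⟩, hvZ⟩ := hwit
          by_cases hvD : v ∈ D
          · exact Or.inr (PrecM.ext_left D Z E₁ hD hprem ⟨v, ⟨hvE₁, hvD⟩, hvZ⟩)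
          · exact Or.inl (PrecM.ext_left Y D E₁ hY h ⟨v, ⟨hvE₁, hvY⟩, hvD⟩)
        · exact Or.inr h
  | ext_right Y Z E₁ hZ hprem hwit ih =>
      -- result : PrecM Y Z from hprem : PrecM Y E₁
      intro D hD hDY hDZ
      by_cases hDE₁ : D = E₁
      · subst hDE₁; exact Or.inl hprem
      · rcases ih D hD hDY hDE₁ with h | h
        · exact Or.inl h
        · -- h : PrecM D E₁
          obtain ⟨v, ⟨hvE₁, hvZ⟩, hvY⟩ := hwit
          by_cases hvD : v ∈ D
          · exact Or.inl (PrecM.ext_right Y D E₁ hD hprem ⟨v, ⟨hvE₁, hvD⟩, hvY⟩)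
          · exact Or.inr (PrecM.ext_right D Z E₁ hZ h ⟨v, ⟨hvE₁, hvZ⟩, hvD⟩)

/-- `≺_M`-incomparability is transitive (no asymmetry needed). -/
lemma precM_incomp_trans (hM : IsMaxClique G M)
    {C D E : Set V} (hC : IsMaxClique G C) (hD : IsMaxClique G D) (hE : IsMaxClique G E)
    (h1 : ¬ PrecM G M C D ∧ ¬ PrecM G M D C) (h2 : ¬ PrecM G M D E ∧ ¬ PrecM G M E D) :
    ¬ PrecM G M C E ∧ ¬ PrecM G M E C := by
  constructor
  · intro h
    by_cases hDC : D = C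
    · subst hDC; exact h2.1 h
    by_cases hDE : D = E
    · subst hDE; exact h1.1 h
    rcases prec_weaklin hM h D hD hDC hDE with h' | h'
    · exact h1.1 h'
    · exact h2.1 h'
  · intro h
    by_cases hDE : D = E
    · subst hDE; exact h1.2 h
    by_cases hDC : D = C
    · subst hDC; exact h2.2 h
    rcases prec_weaklin hM h D hD hDE hDC with h' | h'
    · exact h2.2 h'
    · exact h1.2 h'

/-- Soundness: with respect to a representation whose leftmost-point clique is `M`,
`≺_M` respects the order of the peaks. -/
lemma prec_peak_lt [Fintype V] [Nonempty V] {lo hi : V → ℕ}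
    (hM : IsMaxClique G M) (hrep : IsIntervalRep G lo hi) (k₀ : ℕ)
    (hk₀ : ∀ v, k₀ ≤ lo v) (hMeq : M = {v : V | k₀ ∈ Set.Icc (lo v) (hi v)}) :
    ∀ {C D : Set V}, PrecM G M C D → peak lo C < peak lo D := by
  have hMlo : ∀ v ∈ M, lo v = k₀ := by
    intro v hv
    rw [hMeq, Set.mem_setOf_eq, Set.mem_Icc] at hv
    exact le_antisymm hv.1 (hk₀ v)
  have hpeakM : peak lo M = k₀ := by
    have hne := maxClique_nonempty hM
    have himg : lo '' M = {k₀} := by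
      apply Set.Subset.antisymm
      · rintro x ⟨v, hv, rfl⟩
        exact hMlo v hv
      · rintro x hx
        rw [Set.mem_singleton_iff] at hx
        subst hx
        obtain ⟨v, hv⟩ := hne
        exact ⟨v, hv, hMlo v hv⟩
    rw [peak, himg, csSup_singleton]
  have hpeak_gt : ∀ C : Set V, IsMaxClique G C → C ≠ M → k₀ < peak lo C := by
    intro C hC hne
    obtain ⟨v, hv⟩ := maxClique_nonempty hC
    have h1 : k₀ ≤ peak lo C := le_trans (hk₀ v) (peak_spec hrep hC.1 hv).1
    rcases lt_or_eq_of_le h1 with h | h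
    · exact h
    · exfalso
      have hsub : C ⊆ M := by
        intro w hw
        have hs := peak_spec hrep hC.1 hw
        rw [hMeq, Set.mem_setOf_eq, Set.mem_Icc]
        constructor
        · rw [h]; exact hs.1
        · rw [h]; exact hs.2
      exact hne (maxClique_eq_of_subset hC hM hsub)
  intro C D h
  induction h with
  | init C hC hne =>
      rw [hpeakM]; exact hpeak_gt C hC hne
  | ext_left C D E hC hprem hwit ih =>
      by_contra hle
      push_neg at hle
      obtain ⟨v, ⟨hvE, hvC⟩, hvD⟩ := hwit
      have hE := prec_left hM hprem
      have hD := prec_right hprem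
      have hsE := peak_spec hrep hE.1 hvE
      have hsC := peak_spec hrep hC.1 hvC
      exact hvD (mem_of_peak_mem hrep hD (Set.mem_Icc.mpr
        ⟨le_trans hsE.1 (le_of_lt ih), le_trans hle hsC.2⟩))
  | ext_right C D E hD hprem hwit ih =>
      by_contra hle
      push_neg at hle
      obtain ⟨v, ⟨hvE, hvD⟩, hvC⟩ := hwit
      have hE := prec_right hprem
      have hC := prec_left hM hprem
      have hsE := peak_spec hrep hE.1 hvE
      have hsD := peak_spec hrep hD.1 hvD
      exact hvC (mem_of_peak_mem hrep hC (Set.mem_Icc.mpr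
        ⟨le_trans hsD.1 hle, le_trans (le_of_lt ih) hsE.2⟩))

end PrecBasics

section Construction

variable {V : Type}

/-- The hard direction: if `≺_M` is asymmetric then `M` is a possible end. -/
lemma possibleEnd_of_asymm [Fintype V] [Nonempty V] {G : SimpleGraph V} {M : Set V}
    (hG : IsIntervalGraph G) (hM : IsMaxClique G M)
    (hasym : ∀ C D : Set V, PrecM G M C D → ¬ PrecM G M D C) :
    PossibleEnd G M := by
  classical
  obtain ⟨lo₀, hi₀, hrep₀⟩ := hG
  -- the auxiliary strict order on max cliques: `≺_M`, with ties broken by `peak lo₀`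
  set prlt : Set V → Set V → Prop :=
    fun C D => PrecM G M C D ∨
      (¬ PrecM G M C D ∧ ¬ PrecM G M D C ∧ peak lo₀ C < peak lo₀ D) with hprlt
  have hlt_total : ∀ C D : Set V, IsMaxClique G C → IsMaxClique G D → C ≠ D →
      prlt C D ∨ prlt D C := by
    intro C D hC hD hne
    by_cases h1 : PrecM G M C D
    · exact Or.inl (Or.inl h1)
    by_cases h2 : PrecM G M D C
    · exact Or.inr (Or.inl h2)
    rcases lt_trichotomy (peak lo₀ C) (peak lo₀ D) with h | h | h
    · exact Or.inl (Or.inr ⟨h1, h2, h⟩)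
    · exact absurd (peak_injOn hrep₀ hC hD h) hne
    · exact Or.inr (Or.inr ⟨h2, h1, h⟩)
  have hlt_irrefl : ∀ C : Set V, ¬ prlt C C := by
    intro C h
    rcases h with h | ⟨_, _, h⟩
    · exact prec_irrefl C h
    · exact lt_irrefl _ h
  have hlt_trans : ∀ C D E : Set V, IsMaxClique G C → IsMaxClique G D → IsMaxClique G E →
      prlt C D → prlt D E → prlt C E := by
    intro C D E hC hD hE h1 h2
    rcases h1 with h1 | ⟨h1a, h1b, h1c⟩
    · rcases h2 with h2 | ⟨h2a, h2b, h2c⟩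
      · exact Or.inl (prec_trans hM hasym h2 h1)
      · -- C ≺ D, D ~ E
        by_cases hCE : C = E
        · subst hCE; exact absurd h1 h2b
        by_cases h3 : PrecM G M C E
        · exact Or.inl h3
        by_cases h4 : PrecM G M E C
        · exact absurd (prec_trans hM hasym h1 h4) h2b
        · exact absurd h1 (precM_incomp_trans hM hC hE hD ⟨h3, h4⟩ ⟨h2b, h2a⟩).1
    · rcases h2 with h2 | ⟨h2a, h2b, h2c⟩
      · -- C ~ D, D ≺ E
        by_cases hCE : C = E
        · subst hCE; exact absurd h2 h1b
        by_cases h3 : PrecM G M C E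
        · exact Or.inl h3
        by_cases h4 : PrecM G M E C
        · exact absurd (prec_trans hM hasym h4 h2) h1b
        · exact absurd h2 (precM_incomp_trans hM hD hC hE ⟨h1b, h1a⟩ ⟨h3, h4⟩).1
      · -- both incomparable
        by_cases hCE : C = E
        · subst hCE; exact absurd (lt_trans h1c h2c) (lt_irrefl _)
        by_cases h3 : PrecM G M C E
        · exact Or.inl h3
        by_cases h4 : PrecM G M E C
        · exact absurd h4 (precM_incomp_trans hM hC hD hE ⟨h1a, h1b⟩ ⟨h2a, h2b⟩).2
        · exact Or.inr ⟨h3, h4, lt_trans h1c h2c⟩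
  set q : ℕ := Set.ncard {C : Set V | IsMaxClique G C} with hq
  set idx : Set V → ℕ := fun C => Set.ncard {D : Set V | IsMaxClique G D ∧ prlt D C} with hidx
  have hKfin : {C : Set V | IsMaxClique G C}.Finite := Set.toFinite _
  have hidx_mono : ∀ C D : Set V, IsMaxClique G C → IsMaxClique G D → prlt C D →
      idx C < idx D := by
    intro C D hC hD h
    have hsub : {X : Set V | IsMaxClique G X ∧ prlt X C} ⊆ {X : Set V | IsMaxClique G X ∧ prlt X D} :=
      fun X hX => ⟨hX.1, hlt_trans X C D hX.1 hC hD hX.2 h⟩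
    apply Set.ncard_lt_ncard _ (hKfin.subset fun X hX => hX.1)
    exact (Set.ssubset_iff_of_subset hsub).mpr
      ⟨C, ⟨hC, h⟩, fun hCC => hlt_irrefl C hCC.2⟩
  have hidx_inj : ∀ C D : Set V, IsMaxClique G C → IsMaxClique G D → idx C = idx D →
      C = D := by
    intro C D hC hD h
    by_contra hne
    rcases hlt_total C D hC hD hne with h' | h'
    · exact absurd h (Nat.ne_of_lt (hidx_mono C D hC hD h'))
    · exact absurd h.symm (Nat.ne_of_lt (hidx_mono D C hD hC h'))
  have hidx_lt_q : ∀ C : Set V, IsMaxClique G C → idx C < q := by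
    intro C hC
    apply Set.ncard_lt_ncard _ hKfin
    exact (Set.ssubset_iff_of_subset fun X hX => hX.1).mpr
      ⟨C, hC, fun hX => hlt_irrefl C hX.2⟩
  have hidx_surj : ∀ n, n < q → ∃ C : Set V, IsMaxClique G C ∧ idx C = n := by
    set F : {C : Set V // IsMaxClique G C} → Fin q :=
      fun C => ⟨idx C.1, hidx_lt_q C.1 C.2⟩ with hF
    have hFinj : Function.Injective F := by
      intro C D h
      apply Subtype.ext
      exact hidx_inj C.1 D.1 C.2 D.2 (congrArg Fin.val h)
    have hcard : Fintype.card {C : Set V // IsMaxClique G C} = Fintype.card (Fin q) := by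
      rw [Fintype.card_fin, ← Nat.card_eq_fintype_card]
      have h1 : Nat.card {C : Set V // IsMaxClique G C} =
          ({C : Set V | IsMaxClique G C}).ncard := Nat.card_coe_set_eq _
      rw [h1]
    have hFbij : Function.Bijective F :=
      (Fintype.bijective_iff_injective_and_card F).mpr ⟨hFinj, hcard⟩
    intro n hn
    obtain ⟨C, hC⟩ := hFbij.2 ⟨n, hn⟩
    exact ⟨C.1, C.2, congrArg Fin.val hC⟩
  -- the representation built from `idx`
  set S : V → Set ℕ := fun v => idx '' {C : Set V | IsMaxClique G C ∧ v ∈ C} with hS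
  have hSne : ∀ v, (S v).Nonempty := by
    intro v
    obtain ⟨C, hC, hv⟩ := exists_maxClique_mem G v
    exact ⟨idx C, C, ⟨hC, hv⟩, rfl⟩
  have hSfin : ∀ v, (S v).Finite := fun v => Set.toFinite _
  set lo : V → ℕ := fun v => sInf (S v) with hlo
  set hi : V → ℕ := fun v => sSup (S v) with hhi
  have hlo_mem : ∀ v, lo v ∈ S v := fun v => Nat.sInf_mem (hSne v)
  have hhi_mem : ∀ v, hi v ∈ S v := fun v => Set.Nonempty.csSup_mem (hSne v) (hSfin v)
  have hlo_le : ∀ (v : V) (C : Set V), IsMaxClique G C → v ∈ C → lo v ≤ idx C :=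
    fun v C hC hv => Nat.sInf_le ⟨C, ⟨hC, hv⟩, rfl⟩
  have hle_hi : ∀ (v : V) (C : Set V), IsMaxClique G C → v ∈ C → idx C ≤ hi v :=
    fun v C hC hv => le_csSup (hSfin v).bddAbove ⟨C, ⟨hC, hv⟩, rfl⟩
  have hlohi : ∀ v, lo v ≤ hi v := by
    intro v
    obtain ⟨C, ⟨hC, hv⟩, hCidx⟩ := hlo_mem v
    rw [← hCidx]
    exact hle_hi v C hC hv
  -- consecutiveness
  have hbetween : ∀ (C D E : Set V) (v : V), IsMaxClique G C → IsMaxClique G D →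
      IsMaxClique G E → prlt C D → prlt D E → v ∈ C → v ∈ E → v ∈ D := by
    intro C D E v hC hD hE h1 h2 hvC hvE
    by_contra hvD
    rcases h1 with h1 | ⟨h1a, h1b, h1c⟩
    · have h3 : PrecM G M E D := PrecM.ext_left E D C hE h1 ⟨v, ⟨hvC, hvE⟩, hvD⟩
      rcases h2 with h2 | ⟨h2a, h2b, _⟩
      · exact hasym D E h2 h3
      · exact h2b h3
    · rcases h2 with h2 | ⟨h2a, h2b, h2c⟩
      · exact h1b (PrecM.ext_right D C E hC h2 ⟨v, ⟨hvE, hvC⟩, hvD⟩)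
      · apply hvD
        apply mem_of_peak_mem hrep₀ hD
        rw [Set.mem_Icc]
        have hsC := peak_spec hrep₀ hC.1 hvC
        have hsE := peak_spec hrep₀ hE.1 hvE
        exact ⟨le_trans hsC.1 (le_of_lt h1c), le_trans (le_of_lt h2c) hsE.2⟩
  have hmem_between_idx : ∀ (v : V) (D : Set V), IsMaxClique G D →
      lo v ≤ idx D → idx D ≤ hi v → v ∈ D := by
    intro v D hD h1 h2
    obtain ⟨C₀, ⟨hC₀, hvC₀⟩, hC₀idx⟩ := hlo_mem v
    obtain ⟨C₁, ⟨hC₁, hvC₁⟩, hC₁idx⟩ := hhi_mem v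
    rcases eq_or_lt_of_le h1 with he | h1'
    · have hCD : C₀ = D := hidx_inj _ _ hC₀ hD (by rw [hC₀idx, ← he])
      exact hCD ▸ hvC₀
    rcases eq_or_lt_of_le h2 with he | h2'
    · have hCD : C₁ = D := hidx_inj _ _ hC₁ hD (by rw [hC₁idx, he])
      exact hCD ▸ hvC₁
    have hne₀ : C₀ ≠ D := by
      intro he
      subst he
      rw [hC₀idx] at h1'
      exact lt_irrefl _ h1'
    have hltCD : prlt C₀ D := by
      rcases hlt_total C₀ D hC₀ hD hne₀ with h | h
      · exact h
      · have := hidx_mono D C₀ hD hC₀ h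
        rw [hC₀idx] at this
        omega
    have hne₁ : D ≠ C₁ := by
      intro he
      subst he
      rw [hC₁idx] at h2'
      exact lt_irrefl _ h2'
    have hltDC : prlt D C₁ := by
      rcases hlt_total D C₁ hD hC₁ hne₁ with h | h
      · exact h
      · have := hidx_mono C₁ D hC₁ hD h
        rw [hC₁idx] at this
        omega
    exact hbetween C₀ D C₁ v hC₀ hD hC₁ hltCD hltDC hvC₀ hvC₁
  have hrep : IsIntervalRep G lo hi := by
    refine ⟨hlohi, fun u v huv => ⟨fun hadj => ?_, fun hint => ?_⟩⟩
    · obtain ⟨C, hC, huC, hvC⟩ := adj_exists_maxClique hadj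
      exact ⟨idx C, Set.mem_inter
        (Set.mem_Icc.mpr ⟨hlo_le u C hC huC, hle_hi u C hC huC⟩)
        (Set.mem_Icc.mpr ⟨hlo_le v C hC hvC, hle_hi v C hC hvC⟩)⟩
    · obtain ⟨x, hxu, hxv⟩ := hint
      rw [Set.mem_Icc] at hxu hxv
      have hxq : x < q := by
        obtain ⟨C₁, ⟨hC₁, hvC₁⟩, hC₁idx⟩ := hhi_mem u
        have := hidx_lt_q C₁ hC₁
        rw [hC₁idx] at this
        omega
      obtain ⟨D, hD, hDidx⟩ := hidx_surj x hxq
      have hu := hmem_between_idx u D hD (by rw [hDidx]; exact hxu.1) (by rw [hDidx]; exact hxu.2)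
      have hv := hmem_between_idx v D hD (by rw [hDidx]; exact hxv.1) (by rw [hDidx]; exact hxv.2)
      exact hD.1 hu hv huv
  have hunion : (⋃ v : V, Set.Icc (lo v) (hi v)) = ↑(Finset.range q) := by
    apply Set.Subset.antisymm
    · intro x hx
      rw [Set.mem_iUnion] at hx
      obtain ⟨v, hv⟩ := hx
      rw [Set.mem_Icc] at hv
      obtain ⟨C₁, ⟨hC₁, hvC₁⟩, hC₁idx⟩ := hhi_mem v
      have := hidx_lt_q C₁ hC₁
      rw [hC₁idx] at this
      simp only [Finset.coe_range, Set.mem_Iio]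
      omega
    · intro x hx
      simp only [Finset.coe_range, Set.mem_Iio] at hx
      obtain ⟨D, hD, hDidx⟩ := hidx_surj x hx
      obtain ⟨v, hv⟩ := maxClique_nonempty hD
      rw [Set.mem_iUnion]
      refine ⟨v, Set.mem_Icc.mpr ⟨?_, ?_⟩⟩
      · rw [← hDidx]; exact hlo_le v D hD hv
      · rw [← hDidx]; exact hle_hi v D hD hv
  have huncard : (⋃ v : V, Set.Icc (lo v) (hi v)).ncard = q := by
    rw [hunion, Set.ncard_coe_finset, Finset.card_range]
  have hidxM : idx M = 0 := by
    have hempty : {D : Set V | IsMaxClique G D ∧ prlt D M} = ∅ := by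
      ext D
      simp only [Set.mem_setOf_eq, Set.mem_empty_iff_false, iff_false, not_and]
      intro hD hlt'
      rcases hlt' with h | ⟨h1, h2, h3⟩
      · exact not_prec_M hM hasym h
      · by_cases hDM : D = M
        · subst hDM; exact lt_irrefl _ h3
        · exact h2 (PrecM.init D hD hDM)
    show Set.ncard {D : Set V | IsMaxClique G D ∧ prlt D M} = 0
    rw [hempty, Set.ncard_empty]
  refine ⟨lo, hi, ⟨hrep, ?_⟩, 0, fun v => Nat.zero_le _, ?_⟩
  · intro lo' hi' hrep'
    rw [huncard]
    have hinj : Set.InjOn (peak lo') {C : Set V | IsMaxClique G C} :=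
      fun C hC D hD h => peak_injOn hrep' hC hD h
    have hsub : peak lo' '' {C : Set V | IsMaxClique G C} ⊆
        ⋃ v : V, Set.Icc (lo' v) (hi' v) := by
      rintro x ⟨C, hC, rfl⟩
      obtain ⟨v, hv⟩ := maxClique_nonempty hC
      rw [Set.mem_iUnion]
      exact ⟨v, Set.mem_Icc.mpr ⟨(peak_spec hrep' hC.1 hv).1, (peak_spec hrep' hC.1 hv).2⟩⟩
    have hfin : (⋃ v : V, Set.Icc (lo' v) (hi' v)).Finite :=
      Set.finite_iUnion fun v => Set.finite_Icc _ _
    calc q = (peak lo' '' {C : Set V | IsMaxClique G C}).ncard := by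
            rw [Set.ncard_image_of_injOn hinj]
      _ ≤ _ := Set.ncard_le_ncard hsub hfin
  · apply Set.Subset.antisymm
    · intro v hv
      rw [Set.mem_setOf_eq, Set.mem_Icc]
      refine ⟨?_, Nat.zero_le _⟩
      rw [← hidxM]
      exact hlo_le v M hM hv
    · intro v hv
      rw [Set.mem_setOf_eq, Set.mem_Icc] at hv
      have hlv : lo v = 0 := Nat.le_zero.mp hv.1
      obtain ⟨C₀, ⟨hC₀, hvC₀⟩, hC₀idx⟩ := hlo_mem v
      have hCM : C₀ = M := hidx_inj _ _ hC₀ hM (by rw [hC₀idx, hlv, hidxM])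
      exact hCM ▸ hvC₀

end Construction

/-- Let `G` be a connected interval graph without an apex and `M` a
max clique of `G`.  The following are equivalent: (1) `≺_M` is asymmetric; (2) `≺_M`
is a strict weak order (irreflexive, transitive, and `≺_M`-incomparability is an
equivalence relation on the max cliques of `G`); (3) `M` is a possible end of `G`. -/
theorem precM_asymm_iff_strictWeakOrder_iff_possibleEnd {V : Type} [Fintype V]
    (G : SimpleGraph V) (hG : IsIntervalGraph G) (hconn : G.Connected)
    (hapex : ¬ HasApex G) (M : Set V) (hM : IsMaxClique G M) :
    ((∀ C D : Set V, PrecM G M C D → ¬ PrecM G M D C) ↔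
      ((∀ C : Set V, ¬ PrecM G M C C) ∧
       (∀ C D E : Set V, PrecM G M C D → PrecM G M D E → PrecM G M C E) ∧
       (∀ C D E : Set V, IsMaxClique G C → IsMaxClique G D → IsMaxClique G E →
         (¬ PrecM G M C D ∧ ¬ PrecM G M D C) →
         (¬ PrecM G M D E ∧ ¬ PrecM G M E D) →
         (¬ PrecM G M C E ∧ ¬ PrecM G M E C)))) ∧
    ((∀ C D : Set V, PrecM G M C D → ¬ PrecM G M D C) ↔ PossibleEnd G M) := by
  haveI : Nonempty V := hconn.nonempty
  constructor
  · constructor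
    · intro hasym
      refine ⟨fun C => prec_irrefl C,
        fun C D E h1 h2 => prec_trans hM hasym h2 h1,
        fun C D E hC hD hE h1 h2 => precM_incomp_trans hM hC hD hE h1 h2⟩
    · rintro ⟨hirr, htrans, _⟩ C D h1 h2
      exact hirr C (htrans C D C h1 h2)
  · constructor
    · intro hasym
      exact possibleEnd_of_asymm hG hM hasym
    · rintro ⟨lo, hi, ⟨hrep, _⟩, k₀, hk₀, hMeq⟩ C D h1 h2
      have t1 := prec_peak_lt hM hrep k₀ hk₀ hMeq h1
      have t2 := prec_peak_lt hM hrep k₀ hk₀ hMeq h2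
      omega
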